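/- arXiv:2212.11325 — 4 statements merged into one kernel-verified Lean document; each statement's English description precedes it below -/
import Mathlib

section
/- Let f : (Fin n → ZMod 2) → ZMod 2 be a Boolean function with support Ω_f = {w | f w = 1}. Then the number of elements w ∈ Z_2^n such that the Walsh coefficient W_f(w) = Σ_{x} (−1)^{w·x} f(x) equals |Ω_f| is exactly 2^{n − d}, where d is the dimension of the ZMod 2-linear span of Ω_f inside Fin n → ZMod 2. -/
/-- The Walsh coefficient of a Boolean function `f` at `w`:
`W_f(w) = Σ_{x ∈ Z_2^n} (−1)^{w·x} f(x)`, with `f x` interpreted as `0` or `1` in `ℝ`. -/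
noncomputable def walsh {n : ℕ} (f : (Fin n → ZMod 2) → ZMod 2) (w : Fin n → ZMod 2) : ℝ :=
  ∑ x : Fin n → ZMod 2, (-1 : ℝ) ^ (∑ i, w i * x i).val * ((f x).val : ℝ)

theorem card_walsh_eq_card_support {n : ℕ} (f : (Fin n → ZMod 2) → ZMod 2) :
    {w : Fin n → ZMod 2 | walsh f w = ({w : Fin n → ZMod 2 | f w = 1}.ncard : ℝ)}.ncard =
      2 ^ (n - Module.finrank (ZMod 2)
        (Submodule.span (ZMod 2) {w : Fin n → ZMod 2 | f w = 1})) := by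
  classical
  set Ω : Set (Fin n → ZMod 2) := {w | f w = 1} with hΩ
  set b := Pi.basisFun (ZMod 2) (Fin n) with hb
  have hdual : ∀ w x : Fin n → ZMod 2, b.toDual w x = ∑ i, w i * x i := by
    intro w x
    conv_lhs => rw [← b.sum_repr x]
    rw [map_sum]
    refine Finset.sum_congr rfl fun i _ => ?_
    rw [map_smul, Module.Basis.toDual_apply_left]
    simp [hb, mul_comm]
  set W : Submodule (ZMod 2) (Fin n → ZMod 2) := Submodule.span (ZMod 2) Ω with hW
  set S : Submodule (ZMod 2) (Fin n → ZMod 2) :=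
    W.dualAnnihilator.comap b.toDualEquiv.toLinearMap with hS
  have hmem : ∀ w, w ∈ S ↔ ∀ x ∈ Ω, ∑ i, w i * x i = 0 := by
    intro w
    rw [hS, Submodule.mem_comap, Submodule.mem_dualAnnihilator]
    constructor
    · intro h x hx
      rw [← hdual]
      exact h x (Submodule.subset_span hx)
    · intro h x hx
      have : Ω ⊆ (LinearMap.ker (b.toDualEquiv.toLinearMap w) : Set _) := by
        intro y hy
        simp only [SetLike.mem_coe, LinearMap.mem_ker]
        rw [LinearEquiv.coe_coe, Module.Basis.toDualEquiv_apply, hdual]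
        exact h y hy
      have hle := Submodule.span_le.mpr this
      exact hle hx
  -- the Finset version of the support
  set Ωf : Finset (Fin n → ZMod 2) := Finset.univ.filter (fun x => f x = 1) with hΩf
  have hΩcoe : Ω = ↑Ωf := by
    ext x; simp [hΩ, hΩf]
  have hcard : Ω.ncard = Ωf.card := by rw [hΩcoe, Set.ncard_coe_finset]
  -- rewrite walsh as a sum over the support
  have hwalsh : ∀ w, walsh f w = ∑ x ∈ Ωf, (-1 : ℝ) ^ (∑ i, w i * x i).val := by
    intro w
    rw [walsh, ← Finset.sum_filter_add_sum_filter_not Finset.univ (fun x => f x = 1)]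
    have h2 : ∑ x ∈ Finset.univ.filter (fun x => ¬ f x = 1),
        (-1 : ℝ) ^ (∑ i, w i * x i).val * ((f x).val : ℝ) = 0 := by
      refine Finset.sum_eq_zero fun x hx => ?_
      simp only [Finset.mem_filter] at hx
      have : f x = 0 := by
        have h2 := hx.2
        have hall : ∀ a : ZMod 2, ¬ a = 1 → a = 0 := by decide
        exact hall _ h2
      rw [this]
      simp
    rw [h2, add_zero]
    refine Finset.sum_congr rfl fun x hx => ?_
    simp only [hΩf, Finset.mem_filter] at hx ⊢
    rw [hx.2]
    norm_num [ZMod.val_one]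
  -- the equality set is exactly S
  have hset : {w : Fin n → ZMod 2 | walsh f w = (Ω.ncard : ℝ)} = (S : Set _) := by
    ext w
    simp only [Set.mem_setOf_eq, SetLike.mem_coe, hmem, hwalsh, hcard]
    have hterm : ∀ x : Fin n → ZMod 2,
        (1 : ℝ) - (-1 : ℝ) ^ (∑ i, w i * x i).val ≥ 0 := by
      intro x
      have hv := ZMod.val_lt (∑ i, w i * x i)
      interval_cases h : (∑ i, w i * x i).val <;> norm_num
    constructor
    · intro h x hx
      have hx' : x ∈ Ωf := by rw [← Finset.mem_coe, ← hΩcoe]; exact hx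
      have hsum0 : ∑ x ∈ Ωf, ((1 : ℝ) - (-1 : ℝ) ^ (∑ i, w i * x i).val) = 0 := by
        rw [Finset.sum_sub_distrib, Finset.sum_const, nsmul_eq_mul, mul_one, h]
        ring
      have := (Finset.sum_eq_zero_iff_of_nonneg (fun x _ => hterm x)).mp hsum0 x hx'
      have hone : (-1 : ℝ) ^ (∑ i, w i * x i).val = 1 := by linarith
      by_contra hne
      have h1 : (∑ i, w i * x i) = 1 := by
        have hall : ∀ a : ZMod 2, ¬ a = 0 → a = 1 := by decide
        exact hall _ hne
      rw [h1] at hone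
      norm_num [ZMod.val_one] at hone
    · intro h
      have : ∀ x ∈ Ωf, (-1 : ℝ) ^ (∑ i, w i * x i).val = 1 := by
        intro x hx
        have hx' : x ∈ Ω := by rw [hΩcoe, Finset.mem_coe]; exact hx
        rw [h x hx']
        simp
      rw [Finset.sum_congr rfl this]
      simp
  rw [hset]
  -- cardinality of the submodule S
  have e1 : S ≃ₗ[ZMod 2] W.dualAnnihilator := LinearEquiv.ofSubmodule' _ _
  have e2 : ((Fin n → ZMod 2) ⧸ W) ≃ₗ[ZMod 2] W.dualAnnihilator := Subspace.quotEquivAnnihilator W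
  have e3 : S ≃ₗ[ZMod 2] ((Fin n → ZMod 2) ⧸ W) := e1.trans e2.symm
  have hrank : Module.finrank (ZMod 2) S = n - Module.finrank (ZMod 2) W := by
    rw [e3.finrank_eq]
    have hq := Submodule.finrank_quotient_add_finrank W
    have hV : Module.finrank (ZMod 2) (Fin n → ZMod 2) = n := by
      simp [Module.finrank_pi]
    omega
  have hcardS : Fintype.card S = 2 ^ (n - Module.finrank (ZMod 2) W) := by
    rw [Module.card_eq_pow_finrank (K := ZMod 2) (V := S), ZMod.card, hrank]
  rw [← hcardS]
  rw [Set.ncard_eq_toFinset_card' (S : Set (Fin n → ZMod 2))]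
  simp [Set.toFinset_card]
end

section
/- Let f : (Fin n → ZMod 2) → ZMod 2 be a Boolean function and let A be the 2^n × 2^n rational (or real) matrix indexed by Z_2^n with entries A_{u,v} = f(u + v) (interpreted as 0 or 1). Then the rank of A equals the cardinality of the set {w ∈ Z_2^n | Σ_{x} (−1)^{w·x} f(x) ≠ 0}, i.e. the number of nonzero Walsh coefficients of f. -/
namespace WalshAux

noncomputable def chi (a : ZMod 2) : ℝ := (-1 : ℝ) ^ a.val

lemma chi_add (a b : ZMod 2) : chi (a + b) = chi a * chi b := by
  rcases (by decide : ∀ x : ZMod 2, x = 0 ∨ x = 1) a with rfl | rfl <;>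
    rcases (by decide : ∀ x : ZMod 2, x = 0 ∨ x = 1) b with rfl | rfl <;>
    simp [chi, show ((2:ZMod 2)).val = 0 from rfl, show ((1:ZMod 2)).val = 1 from rfl, show ((1+1:ZMod 2)).val = 0 from rfl]

lemma chi_zero : chi 0 = 1 := by simp [chi]

lemma chi_one : chi 1 = -1 := by
  simp [chi, show ((1:ZMod 2)).val = 1 from rfl]

lemma add_eq_zero_iff {n : ℕ} (w w' : Fin n → ZMod 2) : w + w' = 0 ↔ w = w' := by
  have h : ∀ a b : ZMod 2, a + b = 0 ↔ a = b := by decide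
  constructor
  · intro hh; funext i; exact (h _ _).mp (congrFun hh i)
  · intro hh; subst hh; funext i; exact (h _ _).mpr rfl

lemma charSum {n : ℕ} (c : Fin n → ZMod 2) :
    ∑ v : Fin n → ZMod 2, chi (∑ i, c i * v i) = if c = 0 then (2 : ℝ) ^ n else 0 := by
  by_cases hc : c = 0
  · subst hc
    simp [chi_zero, Finset.card_univ, Fintype.card_fun]
  · simp only [if_neg hc]
    obtain ⟨i0, hi0⟩ : ∃ i0, c i0 ≠ 0 := by
      by_contra h; push_neg at h; exact hc (funext h)
    have hall : ∀ a : ZMod 2, a ≠ 0 → a = 1 := by decide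
    have hc1 : c i0 = 1 := hall _ hi0
    set S := ∑ v : Fin n → ZMod 2, chi (∑ i, c i * v i) with hS
    have key : S = -S := by
      rw [hS]
      nth_rewrite 1 [← Equiv.sum_comp (Equiv.addRight (fun j => if j = i0 then (1 : ZMod 2) else 0))]
      rw [← Finset.sum_neg_distrib]
      apply Finset.sum_congr rfl
      intro v _
      have h1 : ∑ i, c i * (Equiv.addRight (fun j => if j = i0 then (1 : ZMod 2) else 0) v) i
          = (∑ i, c i * v i) + 1 := by
        have : ∀ i, c i * (Equiv.addRight (fun j => if j = i0 then (1 : ZMod 2) else 0) v) i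
            = c i * v i + c i * (if i = i0 then (1 : ZMod 2) else 0) := by
          intro i
          show c i * (v i + if i = i0 then (1 : ZMod 2) else 0) = _
          ring
        rw [Finset.sum_congr rfl (fun i _ => this i), Finset.sum_add_distrib]
        congr 1
        rw [Finset.sum_eq_single i0]
        · simp [hc1]
        · intro b _ hb; simp [hb]
        · intro h; exact absurd (Finset.mem_univ i0) h
      rw [h1, chi_add, chi_one]
      ring
    linarith

end WalshAux

open WalshAux

theorem rank_eq_card_nonzero_walsh {n : ℕ} (f : (Fin n → ZMod 2) → ZMod 2)
    (A : Matrix (Fin n → ZMod 2) (Fin n → ZMod 2) ℝ)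
    (hA : ∀ u v, A u v = ((f (u + v)).val : ℝ)) :
    A.rank = {w : Fin n → ZMod 2 | walsh f w ≠ 0}.ncard := by
  classical
  set H : Matrix (Fin n → ZMod 2) (Fin n → ZMod 2) ℝ :=
    Matrix.of fun w x => chi (∑ i, w i * x i) with hH
  have hHH : H * H = ((2:ℝ)^n) • 1 := by
    ext w w'
    simp only [Matrix.mul_apply, hH, Matrix.of_apply, Matrix.smul_apply, Matrix.one_apply]
    have hstep : ∀ x : Fin n → ZMod 2,
        chi (∑ i, w i * x i) * chi (∑ i, x i * w' i) = chi (∑ i, (w + w') i * x i) := by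
      intro x
      rw [← chi_add]
      congr 1
      rw [← Finset.sum_add_distrib]
      apply Finset.sum_congr rfl
      intro i _
      show w i * x i + x i * w' i = (w i + w' i) * x i
      ring
    rw [Finset.sum_congr rfl (fun x _ => hstep x), charSum,
      if_congr (add_eq_zero_iff w w') rfl rfl]
    split <;> simp
  have hdet : IsUnit H.det := by
    have : H.det * H.det ≠ 0 := by
      rw [← Matrix.det_mul, hHH, Matrix.det_smul, Matrix.det_one, mul_one]
      positivity
    exact isUnit_iff_ne_zero.mpr (fun h => this (by rw [h, zero_mul]))
  have hHAH : H * A * H = ((2:ℝ)^n) • Matrix.diagonal (walsh f) := by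
    ext w w'
    simp only [Matrix.mul_apply, Matrix.smul_apply, Matrix.diagonal_apply, hH, Matrix.of_apply,
      Finset.sum_mul]
    have step : ∀ v, (∑ u, chi (∑ i, w i * u i) * A u v) =
        ∑ x, chi ((∑ i, w i * v i) + ∑ i, w i * x i) * ((f x).val : ℝ) := by
      intro v
      rw [← Equiv.sum_comp (Equiv.addLeft v)]
      apply Finset.sum_congr rfl
      intro x _
      rw [hA]
      have hvx : v + x + v = x := by
        funext i
        show v i + x i + v i = x i
        have : ∀ a b : ZMod 2, a + b + a = b := by decide
        exact this _ _
      congr 1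
      · congr 1
        rw [← Finset.sum_add_distrib]
        apply Finset.sum_congr rfl
        intro i _
        show w i * (v i + x i) = w i * v i + w i * x i
        ring
      · rw [show (Equiv.addLeft v) x + v = x from by
          show v + x + v = x; exact hvx]
    calc ∑ v : Fin n → ZMod 2, ∑ u, chi (∑ i, w i * u i) * A u v * chi (∑ i, v i * w' i)
        = ∑ v : Fin n → ZMod 2, chi (∑ i, (w + w') i * v i) *
            ∑ x, chi (∑ i, w i * x i) * ((f x).val : ℝ) := by
          apply Finset.sum_congr rfl
          intro v _
          rw [← Finset.sum_mul, step v, Finset.sum_mul, Finset.mul_sum]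
          apply Finset.sum_congr rfl
          intro x _
          rw [chi_add]
          have h2 : ∑ i, (w + w') i * v i = (∑ i, w i * v i) + ∑ i, v i * w' i := by
            rw [← Finset.sum_add_distrib]
            apply Finset.sum_congr rfl
            intro i _
            show (w i + w' i) * v i = w i * v i + v i * w' i
            ring
          rw [h2, chi_add]
          ring
      _ = (∑ v : Fin n → ZMod 2, chi (∑ i, (w + w') i * v i)) *
            ∑ x, chi (∑ i, w i * x i) * ((f x).val : ℝ) := by
          rw [Finset.sum_mul]
      _ = (if w + w' = 0 then (2:ℝ)^n else 0) * walsh f w := by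
          rw [charSum]; rfl
      _ = (2:ℝ)^n • if w = w' then walsh f w else 0 := by
          rw [if_congr (add_eq_zero_iff w w') rfl rfl]
          split <;> simp
  have hrank : A.rank = (Matrix.diagonal (fun w => (2:ℝ)^n * walsh f w)).rank := by
    have h1 : (H * A * H).rank = A.rank := by
      rw [Matrix.rank_mul_eq_left_of_isUnit_det _ _ hdet,
        Matrix.rank_mul_eq_right_of_isUnit_det _ _ hdet]
    rw [← h1, hHAH]
    congr 1
    rw [← Matrix.diagonal_smul]
    rfl
  rw [hrank, Matrix.rank_diagonal]
  have h2 : ((2:ℝ)^n) ≠ 0 := by positivity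
  rw [Set.ncard_eq_toFinset_card', Fintype.card_subtype]
  congr 1
  ext w
  simp [h2]
end

section
/- Let f : (Fin n → ZMod 2) → ZMod 2 be a Boolean function whose support Ω_f = {w | f w = 1} spans all of Fin n → ZMod 2 over ZMod 2 (so the associated Cayley graph is connected). Then there exists w ∈ Z_2^n with Walsh coefficient W_f(w) = −|Ω_f| if and only if the Walsh spectrum of f is symmetric with respect to 0, i.e. the multiset {W_f(w) : w ∈ Z_2^n} is equal to the multiset {−W_f(w) : w ∈ Z_2^n}. -/
lemma zmod2_cases (v : ZMod 2) : v = 0 ∨ v = 1 := by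
  fin_cases v
  · exact Or.inl rfl
  · exact Or.inr rfl

lemma neg_one_pow_val_add (u v : ZMod 2) :
    ((-1:ℝ)) ^ (u + v).val = (-1:ℝ) ^ u.val * (-1:ℝ) ^ v.val := by
  rcases zmod2_cases u with rfl | rfl <;> rcases zmod2_cases v with rfl | rfl <;>
    norm_num [show ((2:ZMod 2)).val = 0 from rfl, show ((1:ZMod 2)).val = 1 from rfl,
      show ((0:ZMod 2)).val = 0 from rfl]

lemma sum_val_eq_ncard {n : ℕ} (f : (Fin n → ZMod 2) → ZMod 2) :
    ∑ x : Fin n → ZMod 2, (((f x).val : ℝ)) = ({w : Fin n → ZMod 2 | f w = 1}.ncard : ℝ) := by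
  classical
  rw [Set.ncard_eq_toFinset_card']
  rw [Set.toFinset_setOf]
  rw [Finset.card_filter]
  push_cast
  refine Finset.sum_congr rfl fun x _ => ?_
  rcases zmod2_cases (f x) with h | h <;> rw [h] <;>
    norm_num [show ((1:ZMod 2)).val = 1 from rfl, show ((0:ZMod 2)).val = 0 from rfl]

lemma walsh_zero {n : ℕ} (f : (Fin n → ZMod 2) → ZMod 2) :
    walsh f 0 = ({w : Fin n → ZMod 2 | f w = 1}.ncard : ℝ) := by
  rw [← sum_val_eq_ncard]
  unfold walsh
  refine Finset.sum_congr rfl fun x _ => ?_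
  simp

theorem exists_neg_walsh_iff_spectrum_symmetric {n : ℕ}
    (f : (Fin n → ZMod 2) → ZMod 2)
    (hconn : Submodule.span (ZMod 2) {w : Fin n → ZMod 2 | f w = 1} = ⊤) :
    (∃ w : Fin n → ZMod 2, walsh f w = -({w : Fin n → ZMod 2 | f w = 1}.ncard : ℝ)) ↔
      (Finset.univ.val.map (walsh f) =
        Finset.univ.val.map (fun w : Fin n → ZMod 2 => -walsh f w)) := by
  classical
  constructor
  · rintro ⟨a, ha⟩
    -- key: for all x with f x = 1, a·x = 1
    have h0 : ∑ x : Fin n → ZMod 2,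
        (((-1:ℝ) ^ (∑ i, a i * x i).val + 1) * ((f x).val : ℝ)) = 0 := by
      have : ∑ x : Fin n → ZMod 2,
          (((-1:ℝ) ^ (∑ i, a i * x i).val + 1) * ((f x).val : ℝ))
          = walsh f a + ∑ x : Fin n → ZMod 2, ((f x).val : ℝ) := by
        rw [walsh, ← Finset.sum_add_distrib]
        refine Finset.sum_congr rfl fun x _ => ?_
        ring
      rw [this, ha, sum_val_eq_ncard]; ring
    have hkey : ∀ x : Fin n → ZMod 2, f x = 1 → (∑ i, a i * x i) = 1 := by
      intro x hx
      have hnn : ∀ y ∈ Finset.univ, (0:ℝ) ≤ ((-1:ℝ) ^ (∑ i, a i * y i).val + 1) * ((f y).val : ℝ) := by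
        intro y _
        apply mul_nonneg
        · rcases Nat.even_or_odd (∑ i, a i * y i).val with h | h
          · rw [h.neg_one_pow]; norm_num
          · rw [h.neg_one_pow]; norm_num
        · positivity
      have := (Finset.sum_eq_zero_iff_of_nonneg hnn).mp h0 x (Finset.mem_univ x)
      rcases zmod2_cases (∑ i, a i * x i) with h | h
      · exfalso; rw [h, hx] at this
        rw [show ((0:ZMod 2)).val = 0 from rfl, show ((1:ZMod 2)).val = 1 from rfl] at this
        norm_num at this
      · exact h
    -- walsh f (w + a) = - walsh f w
    have hshift : ∀ w, walsh f (w + a) = - walsh f w := by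
      intro w
      rw [walsh, walsh, ← Finset.sum_neg_distrib]
      refine Finset.sum_congr rfl fun x _ => ?_
      have hsum : (∑ i, (w + a) i * x i) = (∑ i, w i * x i) + (∑ i, a i * x i) := by
        rw [← Finset.sum_add_distrib]
        refine Finset.sum_congr rfl fun i _ => ?_
        simp [add_mul]
      rw [hsum, neg_one_pow_val_add]
      rcases zmod2_cases (f x) with h | h
      · rw [h, show ((0:ZMod 2)).val = 0 from rfl]; norm_num
      · rw [hkey x h, h, show ((1:ZMod 2)).val = 1 from rfl]; ring
    calc Finset.univ.val.map (walsh f)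
        = ((Finset.univ.map (Equiv.addRight a).toEmbedding).val).map (walsh f) := by
          rw [Finset.map_univ_equiv]
      _ = Finset.univ.val.map (fun w : Fin n → ZMod 2 => walsh f (w + a)) := by
          rw [Finset.map_val, Multiset.map_map]; rfl
      _ = Finset.univ.val.map (fun w : Fin n → ZMod 2 => -walsh f w) := by
          exact Multiset.map_congr rfl fun w _ => hshift w
  · intro hsym
    have hmem : walsh f 0 ∈ Finset.univ.val.map (fun w : Fin n → ZMod 2 => -walsh f w) := by
      rw [← hsym]
      exact Multiset.mem_map_of_mem _ (Finset.mem_univ 0)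
    obtain ⟨w, _, hw⟩ := Multiset.mem_map.mp hmem
    exact ⟨w, by rw [← walsh_zero f, ← hw]; ring⟩
end

section
/- Let G be a strongly regular graph with parameters (v, k, λ, μ) on a finite vertex type V, let A be its real adjacency matrix, and suppose x : V → ℝ is a nonzero vector with A.mulVec x = θ • x for some real θ and with Σ_{v ∈ V} x(v) = 0 (x is orthogonal to the all-ones vector). Then θ satisfies the quadratic equation θ² + (μ − λ)·θ + (μ − k) = 0; in particular every eigenvalue of A other than k is one of θ₁ = ((λ−μ) + √((λ−μ)² + 4(k−μ)))/2 or θ₂ = ((λ−μ) − √((λ−μ)² + 4(k−μ)))/2. -/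
theorem srg_eigenvalue_quadratic {V : Type*} [Fintype V] (G : SimpleGraph V)
    [DecidableRel G.Adj] (v k lam mu : ℕ) (h : G.IsSRGWith v k lam mu)
    (θ : ℝ) (x : V → ℝ) (hx : x ≠ 0)
    (hev : (G.adjMatrix ℝ).mulVec x = θ • x)
    (hsum : ∑ u : V, x u = 0) :
    θ ^ 2 + ((mu : ℝ) - (lam : ℝ)) * θ + ((mu : ℝ) - (k : ℝ)) = 0 ∧
      (θ = (((lam : ℝ) - (mu : ℝ)) +
          Real.sqrt (((lam : ℝ) - (mu : ℝ)) ^ 2 + 4 * ((k : ℝ) - (mu : ℝ)))) / 2 ∨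
       θ = (((lam : ℝ) - (mu : ℝ)) -
          Real.sqrt (((lam : ℝ) - (mu : ℝ)) ^ 2 + 4 * ((k : ℝ) - (mu : ℝ)))) / 2) := by
  classical
  obtain ⟨u0, hu0⟩ : ∃ u, x u ≠ 0 := by
    by_contra h'
    push_neg at h'
    exact hx (funext h')
  have hA : ∀ w, (G.adjMatrix ℝ).mulVec x w = θ * x w := by
    intro w; rw [hev]; simp
  have hNsum : ∀ w, ∑ u ∈ G.neighborFinset w, x u = θ * x w := by
    intro w
    rw [← SimpleGraph.adjMatrix_mulVec_apply, hA]
  have hC : ∀ w, (Gᶜ.adjMatrix ℝ).mulVec x w = -(x w) - θ * x w := by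
    intro w
    rw [SimpleGraph.adjMatrix_mulVec_apply, SimpleGraph.neighborFinset_compl]
    rw [Finset.sum_sdiff_eq_sub (by simp [SimpleGraph.mem_neighborFinset])]
    have hcompl : ∑ u ∈ (G.neighborFinset w)ᶜ, x u
        = (∑ u : V, x u) - ∑ u ∈ G.neighborFinset w, x u := by
      rw [eq_sub_iff_add_eq, Finset.sum_compl_add_sum]
    rw [hcompl, hsum, hNsum w]
    simp
    ring
  have hmat := h.matrix_eq (α := ℝ)
  have key := congrArg (fun M => M.mulVec x u0) hmat
  simp only [pow_two, ← Matrix.mulVec_mulVec, Matrix.add_mulVec,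
    Matrix.smul_mulVec, Matrix.one_mulVec, Pi.add_apply, Pi.smul_apply,
    hA, hC, hev, Matrix.mulVec_smul] at key
  have key2 : θ ^ 2 * x u0 = (k : ℝ) * x u0 + (lam : ℝ) * (θ * x u0)
      + (mu : ℝ) * (-(x u0) - θ * x u0) := by
    have := key
    simp only [smul_eq_mul, nsmul_eq_mul] at this
    nlinarith [this]
  have eq1 : θ ^ 2 + ((mu : ℝ) - (lam : ℝ)) * θ + ((mu : ℝ) - (k : ℝ)) = 0 := by
    have h5 : (θ ^ 2 + ((mu : ℝ) - (lam : ℝ)) * θ + ((mu : ℝ) - (k : ℝ))) * x u0 = 0 := by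
      nlinarith [key2]
    rcases mul_eq_zero.mp h5 with h6 | h6
    · exact h6
    · exact absurd h6 hu0
  refine ⟨eq1, ?_⟩
  set s : ℝ := (lam : ℝ) - (mu : ℝ) with hs
  set D : ℝ := s ^ 2 + 4 * ((k : ℝ) - (mu : ℝ)) with hD
  have hDsq : D = (2 * θ - s) ^ 2 := by rw [hD, hs]; nlinarith [eq1]
  have hsqrt : Real.sqrt D = |2 * θ - s| := by
    rw [hDsq, Real.sqrt_sq_eq_abs]
  rcases abs_cases (2 * θ - s) with ⟨habs, _⟩ | ⟨habs, _⟩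
  · left; rw [hsqrt, habs]; ring
  · right; rw [hsqrt, habs]; ring
end
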